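/- Let (γ_h)_{h≥0} be real numbers with Σ_{h=1}^∞ |γ_h| < ∞, and let (w_i) be i.i.d. with E w_1^4 < ∞, θ ∈ ℝ. Then Σ_{h=1}^n γ_h · (1/n)·Σ_{j=1}^{n−h}[(w_j − θ)(w_{j+h} − θ) − (E(w_1−θ))²] → 0 in probability as n → ∞. -/

import Mathlib

open MeasureTheory ProbabilityTheory Filter Finset

set_option linter.unusedSectionVars false
open MeasureTheory ProbabilityTheory Filter Finset

lemma s11_r1 (x : ℝ) : |x| ≤ 1 + x ^ 4 := by
  rcases abs_cases x with ⟨h, _⟩ | ⟨h, _⟩ <;> nlinarith [sq_nonneg (x^2 - 1), sq_nonneg (x^2 - x), sq_nonneg (x^2 + x), sq_nonneg x, sq_nonneg (x-1), sq_nonneg (x+1)]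

lemma s11_r2 (x : ℝ) : x ^ 2 ≤ 1 + x ^ 4 := by nlinarith [sq_nonneg (x^2 - 1)]

lemma s11_rAM2 (u v : ℝ) : |u * v| ≤ (u ^ 2 + v ^ 2) / 2 := by
  rw [abs_mul]
  nlinarith [sq_nonneg (|u| - |v|), sq_abs u, sq_abs v, abs_nonneg u, abs_nonneg v]

lemma s11_r3 (x y : ℝ) : |x * y| ≤ 1 + x ^ 4 + y ^ 4 := by
  have := s11_rAM2 x y
  nlinarith [s11_r2 x, s11_r2 y]

lemma s11_r4 (x y : ℝ) : x ^ 2 * y ^ 2 ≤ x ^ 4 + y ^ 4 := by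
  nlinarith [sq_nonneg (x^2 - y^2)]

lemma s11_r5 (a b : ℝ) : (a - b) ^ 4 ≤ 8 * b ^ 4 + 8 * a ^ 4 := by
  nlinarith [sq_nonneg (a^2 - b^2), sq_nonneg ((a-b)^2), sq_nonneg (a*b), sq_nonneg (a+b), sq_nonneg (a-b), sq_nonneg (a^2+b^2), s11_r4 a b, s11_r4 (a-b) (a+b)]

lemma s11_rY2 (a b m : ℝ) : (a * b - m) ^ 2 ≤ 2 * m ^ 2 + a ^ 4 + b ^ 4 := by
  nlinarith [sq_nonneg (a*b + m), sq_nonneg (a^2 - b^2)]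

lemma s11_rYY (a b c d m : ℝ) :
    |(a * b - m) * (c * d - m)| ≤ 4 * m ^ 2 + a ^ 4 + b ^ 4 + c ^ 4 + d ^ 4 := by
  have h := s11_rAM2 (a*b - m) (c*d - m)
  nlinarith [s11_rY2 a b m, s11_rY2 c d m]

lemma s11_rMark (b t : ℝ) (ht : 0 < t) : |b| ≤ t / 2 + b ^ 2 / (2 * t) := by
  rw [div_add_div _ _ (by positivity) (by positivity), le_div_iff₀ (by positivity)]
  nlinarith [sq_nonneg (|b| - t), sq_abs b, abs_nonneg b]

section s11
variable {Ω : Type*} [MeasureSpace Ω] [IsProbabilityMeasure (ℙ : Measure Ω)]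
  (w : ℕ → Ω → ℝ) (θ : ℝ)
  (hmeas : ∀ i, Measurable (w i))
  (hindep : iIndepFun w ℙ)
  (hid : ∀ i j : ℕ, IdentDistrib (w i) (w j) ℙ ℙ)
  (hm4 : Integrable (fun ω => (w 1 ω) ^ 4))

include hmeas hid hm4 in
lemma s11_int4 (i : ℕ) : Integrable (fun ω => (w i ω - θ) ^ 4) := by
  have h1 : Integrable (fun ω => (w 1 ω - θ) ^ 4) := by
    refine Integrable.mono' ((integrable_const (8 * θ ^ 4)).add (hm4.const_mul 8)) ?_ ?_
    · exact (((hmeas 1).sub_const θ).pow_const 4).aestronglyMeasurable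
    · filter_upwards with ω
      have := s11_r5 (w 1 ω) θ
      rw [Real.norm_eq_abs, abs_of_nonneg (by positivity)]
      simpa using this
  exact (((hid i 1).comp ((measurable_id.sub_const θ).pow_const 4)).integrable_iff).2 h1

include hmeas hid hm4 in
lemma s11_dom {f : Ω → ℝ} (hf : AEStronglyMeasurable f ℙ) (a b c d : ℕ) (C : ℝ)
    (hb : ∀ ω, |f ω| ≤ C + (w a ω - θ)^4 + (w b ω - θ)^4 + (w c ω - θ)^4 + (w d ω - θ)^4) :
    Integrable f := by
  have h4 := s11_int4 w θ hmeas hid hm4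
  refine Integrable.mono'
    (((((integrable_const C).add (h4 a)).add (h4 b)).add (h4 c)).add (h4 d)) hf ?_
  filter_upwards with ω
  simp only [Pi.add_apply]
  rw [Real.norm_eq_abs]
  linarith [hb ω]

include hmeas hid hm4 in
lemma s11_intXX (a b : ℕ) (c : ℝ) :
    Integrable (fun ω => (w a ω - θ) * (w b ω - θ) - c) := by
  refine s11_dom w θ hmeas hid hm4 ?_ a b a b (1 + |c|) fun ω => ?_
  · exact ((((hmeas a).sub_const θ).mul ((hmeas b).sub_const θ)).sub_const c).aestronglyMeasurable
  · have h1 := s11_r3 (w a ω - θ) (w b ω - θ)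
    have h2 : |(w a ω - θ) * (w b ω - θ) - c| ≤ |(w a ω - θ) * (w b ω - θ)| + |c| :=
      abs_sub _ _
    have h3 : (0:ℝ) ≤ (w a ω - θ)^4 := by positivity
    have h4 : (0:ℝ) ≤ (w b ω - θ)^4 := by positivity
    linarith

include hmeas hid hm4 in
lemma s11_intX2X2 (a b : ℕ) :
    Integrable (fun ω => (w a ω - θ)^2 * (w b ω - θ)^2) := by
  refine s11_dom w θ hmeas hid hm4 ?_ a b a b 0 fun ω => ?_
  · exact ((((hmeas a).sub_const θ).pow_const 2).mul
      (((hmeas b).sub_const θ).pow_const 2)).aestronglyMeasurable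
  · have h1 := s11_r4 (w a ω - θ) (w b ω - θ)
    have h3 : (0:ℝ) ≤ (w a ω - θ)^4 := by positivity
    have h4 : (0:ℝ) ≤ (w b ω - θ)^4 := by positivity
    rw [abs_of_nonneg (by positivity)]
    linarith

include hmeas hid hm4 in
lemma s11_intYY (a b c d : ℕ) (m : ℝ) :
    Integrable (fun ω =>
      ((w a ω - θ) * (w b ω - θ) - m) * ((w c ω - θ) * (w d ω - θ) - m)) := by
  refine s11_dom w θ hmeas hid hm4 ?_ a b c d (4 * m ^ 2) fun ω => ?_
  · exact (((((hmeas a).sub_const θ).mul ((hmeas b).sub_const θ)).sub_const m).mul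
      ((((hmeas c).sub_const θ).mul ((hmeas d).sub_const θ)).sub_const m)).aestronglyMeasurable
  · have := s11_rYY (w a ω - θ) (w b ω - θ) (w c ω - θ) (w d ω - θ) m
    linarith

include hmeas hid in
lemma s11_meanX (i : ℕ) : ∫ ω, (w i ω - θ) = ∫ ω', w 1 ω' - θ :=
  ((hid i 1).comp (measurable_id.sub_const θ)).integral_eq

include hmeas hid in
lemma s11_meanX2 (i : ℕ) : ∫ ω, (w i ω - θ)^2 = ∫ ω, (w 1 ω - θ)^2 :=
  ((hid i 1).comp ((measurable_id.sub_const θ).pow_const 2)).integral_eq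

include hmeas hindep hid in
lemma s11_meanXX {i j : ℕ} (hij : i ≠ j) :
    ∫ ω, (w i ω - θ) * (w j ω - θ) = (∫ ω', w 1 ω' - θ) ^ 2 := by
  have hind : IndepFun (fun ω => w i ω - θ) (fun ω => w j ω - θ) ℙ :=
    (hindep.indepFun hij).comp (measurable_id.sub_const θ) (measurable_id.sub_const θ)
  have h2 : ∫ ω, (w i ω - θ) * (w j ω - θ)
      = (∫ ω, (w i ω - θ)) * ∫ ω, (w j ω - θ) :=
    hind.integral_fun_mul_eq_mul_integral (((hmeas i).sub_const θ).aestronglyMeasurable)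
      (((hmeas j).sub_const θ).aestronglyMeasurable)
  rw [h2, s11_meanX w θ hmeas hid i, s11_meanX w θ hmeas hid j, sq]

include hmeas hindep hid in
lemma s11_meanX2X2 {i j : ℕ} (hij : i ≠ j) :
    ∫ ω, (w i ω - θ)^2 * (w j ω - θ)^2 = (∫ ω, (w 1 ω - θ)^2) ^ 2 := by
  have hind : IndepFun (fun ω => (w i ω - θ)^2) (fun ω => (w j ω - θ)^2) ℙ :=
    (hindep.indepFun hij).comp ((measurable_id.sub_const θ).pow_const 2)
      ((measurable_id.sub_const θ).pow_const 2)
  have h2 : ∫ ω, (w i ω - θ)^2 * (w j ω - θ)^2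
      = (∫ ω, (w i ω - θ)^2) * ∫ ω, (w j ω - θ)^2 :=
    hind.integral_fun_mul_eq_mul_integral ((((hmeas i).sub_const θ).pow_const 2).aestronglyMeasurable)
      ((((hmeas j).sub_const θ).pow_const 2).aestronglyMeasurable)
  rw [h2, s11_meanX2 w θ hmeas hid i, s11_meanX2 w θ hmeas hid j, sq]

include hmeas hindep hid hm4 in
lemma s11_meanY {i j : ℕ} (hij : i ≠ j) :
    ∫ ω, ((w i ω - θ) * (w j ω - θ) - (∫ ω', w 1 ω' - θ) ^ 2) = 0 := by
  rw [integral_sub (s11_intXX w θ hmeas hid hm4 i j 0 |>.congr (by filter_upwards with ω; ring))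
    (integrable_const _), integral_const]
  simp [s11_meanXX w θ hmeas hindep hid hij]

include hmeas hindep hid hm4 in
lemma s11_Y2 {i j : ℕ} (hij : i ≠ j) :
    ∫ ω, ((w i ω - θ) * (w j ω - θ) - (∫ ω', w 1 ω' - θ) ^ 2) ^ 2
      = (∫ ω, (w 1 ω - θ)^2) ^ 2 - (∫ ω', w 1 ω' - θ) ^ 4 := by
  set μ := ∫ ω', w 1 ω' - θ with hμ
  set m2 := ∫ ω, (w 1 ω - θ)^2 with hm2
  have hrw : (fun ω => ((w i ω - θ) * (w j ω - θ) - μ ^ 2) ^ 2)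
      = fun ω => ((w i ω - θ)^2 * (w j ω - θ)^2
          - (2 * μ ^ 2) * ((w i ω - θ) * (w j ω - θ) - 0)) + (μ ^ 4) :=
    funext fun ω => by ring
  calc ∫ ω, ((w i ω - θ) * (w j ω - θ) - μ ^ 2) ^ 2
      = ∫ ω, (((w i ω - θ)^2 * (w j ω - θ)^2
          - (2 * μ ^ 2) * ((w i ω - θ) * (w j ω - θ) - 0)) + (μ ^ 4)) := by rw [hrw]
    _ = (∫ ω, ((w i ω - θ)^2 * (w j ω - θ)^2
          - (2 * μ ^ 2) * ((w i ω - θ) * (w j ω - θ) - 0))) + (μ ^ 4) := by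
        rw [integral_add (show Integrable (fun ω => (w i ω - θ)^2 * (w j ω - θ)^2
          - (2 * μ ^ 2) * ((w i ω - θ) * (w j ω - θ) - 0)) ℙ from
            (s11_intX2X2 w θ hmeas hid hm4 i j).sub
              ((s11_intXX w θ hmeas hid hm4 i j 0).const_mul _)) (integrable_const _),
          integral_const]
        simp
    _ = (∫ ω, (w i ω - θ)^2 * (w j ω - θ)^2)
          - (2 * μ ^ 2) * (∫ ω, ((w i ω - θ) * (w j ω - θ) - 0)) + (μ ^ 4) := by
        rw [integral_sub (s11_intX2X2 w θ hmeas hid hm4 i j)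
          ((s11_intXX w θ hmeas hid hm4 i j 0).const_mul _), integral_const_mul]
    _ = m2 ^ 2 - μ ^ 4 := by
        have h1 : ∫ ω, ((w i ω - θ) * (w j ω - θ) - 0) = μ ^ 2 := by
          simp only [sub_zero]
          exact s11_meanXX w θ hmeas hindep hid hij
        rw [s11_meanX2X2 w θ hmeas hindep hid hij, h1, ← hm2]
        ring

include hmeas hindep hid hm4 in
lemma s11_YY0 {a b c d : ℕ} (hac : a ≠ c) (had : a ≠ d) (hbc : b ≠ c) (hbd : b ≠ d)
    (hab : a ≠ b) (hcd : c ≠ d) :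
    ∫ ω, ((w a ω - θ) * (w b ω - θ) - (∫ ω', w 1 ω' - θ) ^ 2)
        * ((w c ω - θ) * (w d ω - θ) - (∫ ω', w 1 ω' - θ) ^ 2) = 0 := by
  set μ := ∫ ω', w 1 ω' - θ with hμ
  have hpair := hindep.indepFun_prodMk_prodMk hmeas a b c d hac had hbc hbd
  have hφ : Measurable (fun p : ℝ × ℝ => (p.1 - θ) * (p.2 - θ) - μ ^ 2) :=
    ((measurable_fst.sub_const θ).mul (measurable_snd.sub_const θ)).sub_const _
  have hind : IndepFun (fun ω => (w a ω - θ) * (w b ω - θ) - μ ^ 2)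
      (fun ω => (w c ω - θ) * (w d ω - θ) - μ ^ 2) ℙ := hpair.comp hφ hφ
  have h2 := hind.integral_fun_mul_eq_mul_integral
    (((((hmeas a).sub_const θ).mul ((hmeas b).sub_const θ)).sub_const _).aestronglyMeasurable)
    (((((hmeas c).sub_const θ).mul ((hmeas d).sub_const θ)).sub_const _).aestronglyMeasurable)
  calc ∫ ω, ((w a ω - θ) * (w b ω - θ) - μ ^ 2) * ((w c ω - θ) * (w d ω - θ) - μ ^ 2)
      = (∫ ω, ((w a ω - θ) * (w b ω - θ) - μ ^ 2))
        * ∫ ω, ((w c ω - θ) * (w d ω - θ) - μ ^ 2) := h2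
    _ = 0 := by
        rw [s11_meanY w θ hmeas hindep hid hm4 hab, zero_mul]

include hmeas hindep hid hm4 in
lemma s11_YYle {a b c d : ℕ} (hab : a ≠ b) (hcd : c ≠ d) :
    ∫ ω, ((w a ω - θ) * (w b ω - θ) - (∫ ω', w 1 ω' - θ) ^ 2)
        * ((w c ω - θ) * (w d ω - θ) - (∫ ω', w 1 ω' - θ) ^ 2)
      ≤ (∫ ω, (w 1 ω - θ)^2) ^ 2 - (∫ ω', w 1 ω' - θ) ^ 4 := by
  set μ := ∫ ω', w 1 ω' - θ with hμ
  have hIab : Integrable (fun ω => ((w a ω - θ) * (w b ω - θ) - μ ^ 2) ^ 2) := by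
    have := s11_intYY w θ hmeas hid hm4 a b a b (μ ^ 2)
    exact this.congr (by filter_upwards with ω; ring)
  have hIcd : Integrable (fun ω => ((w c ω - θ) * (w d ω - θ) - μ ^ 2) ^ 2) := by
    have := s11_intYY w θ hmeas hid hm4 c d c d (μ ^ 2)
    exact this.congr (by filter_upwards with ω; ring)
  calc ∫ ω, ((w a ω - θ) * (w b ω - θ) - μ ^ 2) * ((w c ω - θ) * (w d ω - θ) - μ ^ 2)
      ≤ ∫ ω, (((w a ω - θ) * (w b ω - θ) - μ ^ 2) ^ 2
          + ((w c ω - θ) * (w d ω - θ) - μ ^ 2) ^ 2) / 2 := by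
        refine integral_mono (s11_intYY w θ hmeas hid hm4 a b c d (μ ^ 2))
          ((hIab.add hIcd).div_const 2) fun ω => ?_
        have := s11_rAM2 ((w a ω - θ) * (w b ω - θ) - μ ^ 2)
          ((w c ω - θ) * (w d ω - θ) - μ ^ 2)
        exact (le_abs_self _).trans this
    _ = ((∫ ω, ((w a ω - θ) * (w b ω - θ) - μ ^ 2) ^ 2)
          + ∫ ω, ((w c ω - θ) * (w d ω - θ) - μ ^ 2) ^ 2) / 2 := by
        rw [integral_div, integral_add hIab hIcd]
    _ = (∫ ω, (w 1 ω - θ)^2) ^ 2 - μ ^ 4 := by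
        rw [s11_Y2 w θ hmeas hindep hid hm4 hab, s11_Y2 w θ hmeas hindep hid hm4 hcd]
        ring

include hmeas hindep hid hm4 in
lemma s11_K0 : 0 ≤ (∫ ω, (w 1 ω - θ)^2) ^ 2 - (∫ ω', w 1 ω' - θ) ^ 4 := by
  rw [← s11_Y2 w θ hmeas hindep hid hm4 (i := 1) (j := 2) (by norm_num)]
  exact integral_nonneg fun ω => sq_nonneg _

include hmeas hindep hid hm4 in
lemma s11_sum2 (n h : ℕ) (hh : 1 ≤ h) :
    ∫ ω, (∑ j ∈ Icc 1 (n - h),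
        ((w j ω - θ) * (w (j + h) ω - θ) - (∫ ω', w 1 ω' - θ) ^ 2)) ^ 2
      ≤ 3 * n * ((∫ ω, (w 1 ω - θ)^2) ^ 2 - (∫ ω', w 1 ω' - θ) ^ 4) := by
  set μ := ∫ ω', w 1 ω' - θ with hμ
  set m2 := ∫ ω, (w 1 ω - θ)^2 with hm2
  set K := m2 ^ 2 - μ ^ 4 with hK
  have hK0 : 0 ≤ K := s11_K0 w θ hmeas hindep hid hm4
  set s : Finset ℕ := Icc 1 (n - h) with hs
  have hYne : ∀ j : ℕ, j ≠ j + h := fun j => by omega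
  have IYY : ∀ j k : ℕ, Integrable (fun ω =>
      ((w j ω - θ) * (w (j + h) ω - θ) - μ ^ 2)
        * ((w k ω - θ) * (w (k + h) ω - θ) - μ ^ 2)) :=
    fun j k => s11_intYY w θ hmeas hid hm4 j (j+h) k (k+h) (μ^2)
  have hcov : ∀ j k : ℕ, (∫ ω, ((w j ω - θ) * (w (j + h) ω - θ) - μ ^ 2)
      * ((w k ω - θ) * (w (k + h) ω - θ) - μ ^ 2)) ≤ K :=
    fun j k => s11_YYle w θ hmeas hindep hid hm4 (hYne j) (hYne k)
  have hzero : ∀ j k : ℕ, k ≠ j → k + h ≠ j → k ≠ j + h →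
      (∫ ω, ((w j ω - θ) * (w (j + h) ω - θ) - μ ^ 2)
        * ((w k ω - θ) * (w (k + h) ω - θ) - μ ^ 2)) = 0 := by
    intro j k h1 h2 h3
    exact s11_YY0 w θ hmeas hindep hid hm4 (by omega) (by omega) (by omega) (by omega)
      (hYne j) (hYne k)
  have hexp : (fun ω => (∑ j ∈ s,
        ((w j ω - θ) * (w (j + h) ω - θ) - μ ^ 2)) ^ 2)
      = fun ω => ∑ j ∈ s, ∑ k ∈ s,
        ((w j ω - θ) * (w (j + h) ω - θ) - μ ^ 2)
          * ((w k ω - θ) * (w (k + h) ω - θ) - μ ^ 2) := by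
    funext ω; rw [sq, Finset.sum_mul_sum]
  rw [hexp, integral_finset_sum s (fun j _ => integrable_finset_sum s fun k _ => IYY j k)]
  have hinner : ∀ j ∈ s, (∑ k ∈ s, ∫ ω,
      ((w j ω - θ) * (w (j + h) ω - θ) - μ ^ 2)
        * ((w k ω - θ) * (w (k + h) ω - θ) - μ ^ 2)) ≤ 3 * K := by
    intro j _
    have hfil : (∑ k ∈ s, ∫ ω,
        ((w j ω - θ) * (w (j + h) ω - θ) - μ ^ 2)
          * ((w k ω - θ) * (w (k + h) ω - θ) - μ ^ 2))
        = ∑ k ∈ s.filter (fun k => k ∈ ({j - h, j, j + h} : Finset ℕ)), ∫ ω,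
        ((w j ω - θ) * (w (j + h) ω - θ) - μ ^ 2)
          * ((w k ω - θ) * (w (k + h) ω - θ) - μ ^ 2) := by
      refine (Finset.sum_filter_of_ne ?_).symm
      intro k _ hne
      by_contra hk
      simp only [Finset.mem_insert, Finset.mem_singleton] at hk
      push_neg at hk
      exact hne (hzero j k hk.2.1 (by omega) hk.2.2)
    rw [hfil]
    have hcard : (s.filter (fun k => k ∈ ({j - h, j, j + h} : Finset ℕ))).card ≤ 3 := by
      refine le_trans (Finset.card_le_card fun x hx => (Finset.mem_filter.1 hx).2) ?_
      refine (Finset.card_insert_le _ _).trans (Nat.succ_le_succ ?_)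
      exact (Finset.card_insert_le _ _).trans (Nat.succ_le_succ (by simp))
    calc (∑ k ∈ s.filter (fun k => k ∈ ({j - h, j, j + h} : Finset ℕ)), ∫ ω,
        ((w j ω - θ) * (w (j + h) ω - θ) - μ ^ 2)
          * ((w k ω - θ) * (w (k + h) ω - θ) - μ ^ 2))
        ≤ ∑ _k ∈ s.filter (fun k => k ∈ ({j - h, j, j + h} : Finset ℕ)), K :=
          Finset.sum_le_sum fun k _ => hcov j k
      _ = ((s.filter (fun k => k ∈ ({j - h, j, j + h} : Finset ℕ))).card : ℝ) * K := by
          rw [Finset.sum_const, nsmul_eq_mul]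
      _ ≤ 3 * K := mul_le_mul_of_nonneg_right (by exact_mod_cast hcard) hK0
  calc (∑ j ∈ s, ∫ ω, ∑ k ∈ s,
      ((w j ω - θ) * (w (j + h) ω - θ) - μ ^ 2)
        * ((w k ω - θ) * (w (k + h) ω - θ) - μ ^ 2))
      = ∑ j ∈ s, ∑ k ∈ s, ∫ ω,
      ((w j ω - θ) * (w (j + h) ω - θ) - μ ^ 2)
        * ((w k ω - θ) * (w (k + h) ω - θ) - μ ^ 2) :=
        Finset.sum_congr rfl fun j _ => integral_finset_sum s fun k _ => IYY j k
    _ ≤ ∑ _j ∈ s, 3 * K := Finset.sum_le_sum hinner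
    _ = (s.card : ℝ) * (3 * K) := by rw [Finset.sum_const, nsmul_eq_mul]
    _ ≤ (n : ℝ) * (3 * K) := by
        refine mul_le_mul_of_nonneg_right ?_ (by positivity)
        have : s.card ≤ n := by rw [hs, Nat.card_Icc]; omega
        exact_mod_cast this
    _ = 3 * n * K := by ring

include hmeas hindep hid hm4 in
lemma s11_EB (n h : ℕ) (hh : 1 ≤ h) (hn : 1 ≤ n) :
    ∫ ω, |(1 / (n : ℝ)) * ∑ j ∈ Icc 1 (n - h),
        ((w j ω - θ) * (w (j + h) ω - θ) - (∫ ω', w 1 ω' - θ) ^ 2)|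
      ≤ (1 + 3 * ((∫ ω, (w 1 ω - θ)^2) ^ 2 - (∫ ω', w 1 ω' - θ) ^ 4))
          / (2 * Real.sqrt n) := by
  set μ := ∫ ω', w 1 ω' - θ with hμ
  set m2 := ∫ ω, (w 1 ω - θ)^2 with hm2
  set K := m2 ^ 2 - μ ^ 4 with hK
  have hK0 : 0 ≤ K := s11_K0 w θ hmeas hindep hid hm4
  set s : Finset ℕ := Icc 1 (n - h) with hs
  have hn0 : (0:ℝ) < n := by exact_mod_cast hn
  have hsq : 0 < Real.sqrt n := Real.sqrt_pos.2 hn0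
  have hss : Real.sqrt n * Real.sqrt n = (n : ℝ) := Real.mul_self_sqrt (le_of_lt hn0)
  set t : ℝ := (Real.sqrt n)⁻¹ with ht
  have ht0 : 0 < t := by positivity
  have IY : ∀ j : ℕ, Integrable (fun ω => (w j ω - θ) * (w (j + h) ω - θ) - μ ^ 2) :=
    fun j => s11_intXX w θ hmeas hid hm4 j (j+h) (μ^2)
  have IYY : ∀ j k : ℕ, Integrable (fun ω =>
      ((w j ω - θ) * (w (j + h) ω - θ) - μ ^ 2)
        * ((w k ω - θ) * (w (k + h) ω - θ) - μ ^ 2)) :=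
    fun j k => s11_intYY w θ hmeas hid hm4 j (j+h) k (k+h) (μ^2)
  have IB : Integrable (fun ω => (1 / (n : ℝ)) * ∑ j ∈ s,
      ((w j ω - θ) * (w (j + h) ω - θ) - μ ^ 2)) :=
    (integrable_finset_sum s fun j _ => IY j).const_mul _
  have IB2 : Integrable (fun ω => ((1 / (n : ℝ)) * ∑ j ∈ s,
      ((w j ω - θ) * (w (j + h) ω - θ) - μ ^ 2)) ^ 2) := by
    have h1 : Integrable (fun ω => (1 / (n : ℝ)) ^ 2 * ∑ j ∈ s, ∑ k ∈ s,
        ((w j ω - θ) * (w (j + h) ω - θ) - μ ^ 2)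
          * ((w k ω - θ) * (w (k + h) ω - θ) - μ ^ 2)) :=
      (integrable_finset_sum s fun j _ => integrable_finset_sum s fun k _ => IYY j k).const_mul _
    refine h1.congr (Filter.Eventually.of_forall fun ω => ?_)
    dsimp only
    rw [← Finset.sum_mul_sum]
    ring
  have hEB2 : ∫ ω, ((1 / (n : ℝ)) * ∑ j ∈ s,
      ((w j ω - θ) * (w (j + h) ω - θ) - μ ^ 2)) ^ 2 ≤ 3 * K / n := by
    have hrw : (fun ω => ((1 / (n : ℝ)) * ∑ j ∈ s,
        ((w j ω - θ) * (w (j + h) ω - θ) - μ ^ 2)) ^ 2)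
        = fun ω => (1 / (n : ℝ)) ^ 2 * (∑ j ∈ s,
        ((w j ω - θ) * (w (j + h) ω - θ) - μ ^ 2)) ^ 2 := funext fun ω => by ring
    rw [hrw, integral_const_mul]
    calc (1 / (n : ℝ)) ^ 2 * ∫ ω, (∑ j ∈ s,
        ((w j ω - θ) * (w (j + h) ω - θ) - μ ^ 2)) ^ 2
        ≤ (1 / (n : ℝ)) ^ 2 * (3 * n * K) :=
          mul_le_mul_of_nonneg_left (s11_sum2 w θ hmeas hindep hid hm4 n h hh) (by positivity)
      _ = 3 * K / n := by field_simp
  calc ∫ ω, |(1 / (n : ℝ)) * ∑ j ∈ s,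
        ((w j ω - θ) * (w (j + h) ω - θ) - μ ^ 2)|
      ≤ ∫ ω, (t / 2 + ((1 / (n : ℝ)) * ∑ j ∈ s,
        ((w j ω - θ) * (w (j + h) ω - θ) - μ ^ 2)) ^ 2 / (2 * t)) := by
        refine integral_mono IB.abs (show Integrable _ ℙ from
          (integrable_const (t / 2)).add (IB2.div_const (2 * t))) fun ω => ?_
        exact s11_rMark _ t ht0
    _ = t / 2 + (∫ ω, ((1 / (n : ℝ)) * ∑ j ∈ s,
        ((w j ω - θ) * (w (j + h) ω - θ) - μ ^ 2)) ^ 2) / (2 * t) := by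
        rw [integral_add (integrable_const _) (show Integrable _ ℙ from IB2.div_const (2 * t)),
          integral_const, integral_div]
        simp
    _ ≤ t / 2 + (3 * K / n) / (2 * t) := by
        have h2t : (0:ℝ) < 2 * t := by positivity
        gcongr
    _ = (1 + 3 * K) / (2 * Real.sqrt n) := by
        rw [ht]
        field_simp
        linear_combination (3 * (m2 ^ 2 - μ ^ 4)) * hss

end s11

/-- With `∑_{h≥1} |γ_h| < ∞` and i.i.d. weights with `E w₁⁴ < ∞`,
`∑_{h=1}^n γ_h (1/n) ∑_{j=1}^{n-h} [(w_j-θ)(w_{j+h}-θ) - (E(w₁-θ))²] → 0` in probability. -/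
theorem stmt11
    {Ω : Type*} [MeasureSpace Ω] [IsProbabilityMeasure (ℙ : Measure Ω)]
    (w : ℕ → Ω → ℝ) (γ : ℕ → ℝ)
    (hγ : Summable (fun h => |γ h|))
    (hmeas : ∀ i, Measurable (w i))
    (hindep : iIndepFun w ℙ)
    (hid : ∀ i j : ℕ, IdentDistrib (w i) (w j) ℙ ℙ)
    (hm4 : Integrable (fun ω => (w 1 ω) ^ 4))
    (θ : ℝ) :
    ∀ ε > (0 : ℝ),
      Tendsto (fun n : ℕ =>
          ℙ {ω | ε < |∑ h ∈ Icc 1 n, γ h * ((1 / (n : ℝ)) * ∑ j ∈ Icc 1 (n - h),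
                ((w j ω - θ) * (w (j + h) ω - θ) - (∫ ω', w 1 ω' - θ) ^ 2))|})
        atTop (nhds 0) := by
  intro ε hε
  set μ := ∫ ω', w 1 ω' - θ with hμ
  set m2 := ∫ ω, (w 1 ω - θ)^2 with hm2
  set K := m2 ^ 2 - μ ^ 4 with hK
  have hK0 : 0 ≤ K := s11_K0 w θ hmeas hindep hid hm4
  set Cc : ℝ := (1 + 3 * K) / 2 with hCc
  have hCc0 : 0 ≤ Cc := by positivity
  set G : ℝ := ∑' h, |γ h| with hG
  have hG0 : 0 ≤ G := tsum_nonneg fun h => abs_nonneg _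
  have IB : ∀ n h : ℕ, Integrable (fun ω => (1 / (n : ℝ)) * ∑ j ∈ Icc 1 (n - h),
      ((w j ω - θ) * (w (j + h) ω - θ) - μ ^ 2)) := fun n h =>
    (integrable_finset_sum _ fun j _ => s11_intXX w θ hmeas hid hm4 j (j + h) (μ ^ 2)).const_mul _
  have IS : ∀ n : ℕ, Integrable (fun ω => ∑ h ∈ Icc 1 n, γ h * ((1 / (n : ℝ)) *
      ∑ j ∈ Icc 1 (n - h), ((w j ω - θ) * (w (j + h) ω - θ) - μ ^ 2))) := fun n =>
    integrable_finset_sum _ fun h _ => (IB n h).const_mul _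
  have hES : ∀ n : ℕ, 1 ≤ n → (∫ ω, |∑ h ∈ Icc 1 n, γ h * ((1 / (n : ℝ)) *
      ∑ j ∈ Icc 1 (n - h), ((w j ω - θ) * (w (j + h) ω - θ) - μ ^ 2))|)
        ≤ G * Cc / Real.sqrt n := by
    intro n hn
    have hsq : 0 < Real.sqrt n := Real.sqrt_pos.2 (by exact_mod_cast hn)
    calc (∫ ω, |∑ h ∈ Icc 1 n, γ h * ((1 / (n : ℝ)) *
        ∑ j ∈ Icc 1 (n - h), ((w j ω - θ) * (w (j + h) ω - θ) - μ ^ 2))|)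
        ≤ ∫ ω, ∑ h ∈ Icc 1 n, |γ h| * |(1 / (n : ℝ)) *
          ∑ j ∈ Icc 1 (n - h), ((w j ω - θ) * (w (j + h) ω - θ) - μ ^ 2)| := by
          refine integral_mono (IS n).abs (integrable_finset_sum _ fun h _ =>
            ((IB n h).abs.const_mul _)) fun ω => ?_
          refine (Finset.abs_sum_le_sum_abs _ _).trans (le_of_eq ?_)
          exact Finset.sum_congr rfl fun h _ => abs_mul _ _
      _ = ∑ h ∈ Icc 1 n, |γ h| * ∫ ω, |(1 / (n : ℝ)) *
          ∑ j ∈ Icc 1 (n - h), ((w j ω - θ) * (w (j + h) ω - θ) - μ ^ 2)| := by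
          rw [integral_finset_sum _ fun h _ => ((IB n h).abs.const_mul _)]
          exact Finset.sum_congr rfl fun h _ => integral_const_mul _ _
      _ ≤ ∑ h ∈ Icc 1 n, |γ h| * (Cc / Real.sqrt n) := by
          refine Finset.sum_le_sum fun h hm => ?_
          refine mul_le_mul_of_nonneg_left ?_ (abs_nonneg _)
          have h1 : 1 ≤ h := (Finset.mem_Icc.1 hm).1
          have := s11_EB w θ hmeas hindep hid hm4 n h h1 hn
          rw [hCc, div_div]
          exact this
      _ = (∑ h ∈ Icc 1 n, |γ h|) * (Cc / Real.sqrt n) := (Finset.sum_mul _ _ _).symm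
      _ ≤ G * (Cc / Real.sqrt n) := by
          refine mul_le_mul_of_nonneg_right ?_ (by positivity)
          exact hγ.sum_le_tsum _ (fun _ _ => abs_nonneg _)
      _ = G * Cc / Real.sqrt n := by ring
  have hMar : ∀ n : ℕ, 1 ≤ n →
      ℙ {ω | ε < |∑ h ∈ Icc 1 n, γ h * ((1 / (n : ℝ)) * ∑ j ∈ Icc 1 (n - h),
          ((w j ω - θ) * (w (j + h) ω - θ) - μ ^ 2))|}
        ≤ ENNReal.ofReal (G * Cc / ε * (Real.sqrt n)⁻¹) := by
    intro n hn
    have hsq : 0 < Real.sqrt n := Real.sqrt_pos.2 (by exact_mod_cast hn)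
    have h1 := mul_meas_ge_le_integral_of_nonneg
      (f := fun ω => |∑ h ∈ Icc 1 n, γ h * ((1 / (n : ℝ)) * ∑ j ∈ Icc 1 (n - h),
        ((w j ω - θ) * (w (j + h) ω - θ) - μ ^ 2))|)
      (Filter.Eventually.of_forall fun ω => abs_nonneg _) (IS n).abs ε
    have hsub : ℙ {ω | ε < |∑ h ∈ Icc 1 n, γ h * ((1 / (n : ℝ)) * ∑ j ∈ Icc 1 (n - h),
          ((w j ω - θ) * (w (j + h) ω - θ) - μ ^ 2))|}
        ≤ ℙ {ω | ε ≤ |∑ h ∈ Icc 1 n, γ h * ((1 / (n : ℝ)) * ∑ j ∈ Icc 1 (n - h),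
          ((w j ω - θ) * (w (j + h) ω - θ) - μ ^ 2))|} :=
      measure_mono (Set.setOf_subset_setOf.2 fun ω hω => le_of_lt hω)
    refine (ENNReal.le_ofReal_iff_toReal_le (measure_ne_top _ _) (by positivity)).2 ?_
    have h2 : (ℙ {ω | ε < |∑ h ∈ Icc 1 n, γ h * ((1 / (n : ℝ)) * ∑ j ∈ Icc 1 (n - h),
          ((w j ω - θ) * (w (j + h) ω - θ) - μ ^ 2))|}).toReal
        ≤ (ℙ {ω | ε ≤ |∑ h ∈ Icc 1 n, γ h * ((1 / (n : ℝ)) * ∑ j ∈ Icc 1 (n - h),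
          ((w j ω - θ) * (w (j + h) ω - θ) - μ ^ 2))|}).toReal :=
      ENNReal.toReal_mono (measure_ne_top _ _) hsub
    have h3 := hES n hn
    calc (ℙ {ω | ε < |∑ h ∈ Icc 1 n, γ h * ((1 / (n : ℝ)) * ∑ j ∈ Icc 1 (n - h),
          ((w j ω - θ) * (w (j + h) ω - θ) - μ ^ 2))|}).toReal
        ≤ (ℙ {ω | ε ≤ |∑ h ∈ Icc 1 n, γ h * ((1 / (n : ℝ)) * ∑ j ∈ Icc 1 (n - h),
          ((w j ω - θ) * (w (j + h) ω - θ) - μ ^ 2))|}).toReal := h2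
      _ ≤ (∫ ω, |∑ h ∈ Icc 1 n, γ h * ((1 / (n : ℝ)) * ∑ j ∈ Icc 1 (n - h),
          ((w j ω - θ) * (w (j + h) ω - θ) - μ ^ 2))|) / ε := by
          rw [le_div_iff₀ hε]
          calc _ ≤ ε * (ℙ {ω | ε ≤ |∑ h ∈ Icc 1 n, γ h * ((1 / (n : ℝ)) *
              ∑ j ∈ Icc 1 (n - h), ((w j ω - θ) * (w (j + h) ω - θ) - μ ^ 2))|}).toReal := by
                rw [mul_comm]
            _ ≤ _ := h1
      _ ≤ (G * Cc / Real.sqrt n) / ε := by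
          exact div_le_div_of_nonneg_right h3 hε.le
      _ = G * Cc / ε * (Real.sqrt n)⁻¹ := by ring
  have hst : Tendsto (fun n : ℕ => Real.sqrt (n : ℝ)) atTop atTop := by
    have h1 := (tendsto_rpow_atTop (y := (1:ℝ)/2) (by norm_num)).comp
      (tendsto_natCast_atTop_atTop (R := ℝ))
    refine Tendsto.congr (fun n => ?_) h1
    exact (Real.sqrt_eq_rpow _).symm
  have hub : Tendsto (fun n : ℕ => ENNReal.ofReal (G * Cc / ε * (Real.sqrt n)⁻¹))
      atTop (nhds 0) := by
    have h2 : Tendsto (fun n : ℕ => G * Cc / ε * (Real.sqrt n)⁻¹) atTop (nhds 0) := by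
      have h3 := hst.inv_tendsto_atTop
      have h4 := h3.const_mul (G * Cc / ε)
      simpa using h4
    have := ENNReal.tendsto_ofReal h2
    simpa using this
  refine tendsto_of_tendsto_of_tendsto_of_le_of_le' tendsto_const_nhds hub
    (Filter.Eventually.of_forall fun n => zero_le) ?_
  filter_upwards [Filter.eventually_ge_atTop 1] with n hn
  exact hMar n hn
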